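/- For every p ≥ 1 and every f : [0,1] → ℝ of bounded p-variation, ∫₀¹ limsup_{h→0} |f(x+h)−f(x)|^p / |h| dx ≤ 𝒱_p(f). -/
import Mathlib


open MeasureTheory Topology

/-- The set of all sums `∑ g(tᵢ, tᵢ₊₁)` over partitions `a = t₀ < t₁ < ⋯ < tₙ = b`. -/
def partitionSums (g : ℝ → ℝ → ℝ) (a b : ℝ) : Set ℝ :=
  {S | ∃ (n : ℕ) (t : ℕ → ℝ), 0 < n ∧ t 0 = a ∧ t n = b ∧
    (∀ i < n, t i < t (i + 1)) ∧ S = ∑ i ∈ Finset.range n, g (t i) (t (i + 1))}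

namespace MarcAux

lemma chain_lt {t : ℕ → ℝ} : ∀ {n : ℕ}, (∀ i < n, t i < t (i + 1)) → 0 < n → t 0 < t n := by
  intro n
  induction n with
  | zero => intro _ h; omega
  | succ m ih =>
    intro h _
    rcases Nat.eq_zero_or_pos m with rfl | hm
    · exact h 0 (by omega)
    · exact (ih (fun i hi => h i (by omega)) hm).trans (h m (by omega))

variable (φ : ℝ → ℝ → ℝ)

lemma sum_nonneg (hφ : ∀ s t, 0 ≤ φ s t) {x S : ℝ} (hS : S ∈ partitionSums φ 0 x) : 0 ≤ S := by
  obtain ⟨n, t, hn, h0, hxn, hmono, rfl⟩ := hS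
  exact Finset.sum_nonneg fun i _ => hφ _ _

lemma empty_of_nonpos {x : ℝ} (hx : x ≤ 0) : partitionSums φ 0 x = ∅ := by
  ext S
  simp only [Set.mem_empty_iff_false, iff_false]
  rintro ⟨n, t, hn, h0, hxn, hmono, rfl⟩
  have := chain_lt hmono hn
  rw [h0, hxn] at this
  linarith

lemma nonempty_of_pos {x : ℝ} (hx : 0 < x) : (partitionSums φ 0 x).Nonempty := by
  refine ⟨φ 0 x, 1, fun i => if i = 0 then 0 else x, one_pos, by simp, by simp, ?_, by simp⟩
  intro i hi
  interval_cases i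
  simpa using hx

lemma extend {x y S : ℝ} (hxy : x < y) (hS : S ∈ partitionSums φ 0 x) :
    S + φ x y ∈ partitionSums φ 0 y := by
  obtain ⟨n, t, hn, h0, hxn, hmono, rfl⟩ := hS
  refine ⟨n + 1, fun i => if i < n + 1 then t i else y, by omega, by simp [h0], by simp, ?_, ?_⟩
  · intro i hi
    rcases lt_or_ge i n with h | h
    · simpa [Nat.lt_succ_of_lt h, Nat.succ_lt_succ h] using hmono i h
    · have : i = n := by omega
      subst this
      simp only [Nat.lt_succ_self, if_true, lt_self_iff_false, if_false]
      rw [hxn]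
      exact hxy
  · rw [Finset.sum_range_succ]
    congr 1
    · apply Finset.sum_congr rfl
      intro i hi
      rw [Finset.mem_range] at hi
      simp [Nat.lt_succ_of_lt hi, Nat.succ_lt_succ hi]
    · simp [hxn]

lemma bdd (hφ : ∀ s t, 0 ≤ φ s t) (hbdd : BddAbove (partitionSums φ 0 1)) {x : ℝ} (hx : x ≤ 1) :
    BddAbove (partitionSums φ 0 x) := by
  rcases lt_or_eq_of_le hx with hx1 | rfl
  · refine ⟨sSup (partitionSums φ 0 1), fun S hS => ?_⟩
    have h1 := le_csSup hbdd (extend φ hx1 hS)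
    have := hφ x 1
    linarith
  · exact hbdd

variable (hφ : ∀ s t, 0 ≤ φ s t) (hbdd : BddAbove (partitionSums φ 0 1))

/-- The cumulative `φ`-variation, truncated at `1`. -/
noncomputable def G : ℝ → ℝ := fun x => sSup (partitionSums φ 0 (min x 1))

include hφ hbdd

lemma G_nonneg (x : ℝ) : 0 ≤ G φ x :=
  Real.sSup_nonneg fun _ hS => sum_nonneg φ hφ hS

lemma G_zero_of_nonpos {x : ℝ} (hx : x ≤ 0) : G φ x = 0 := by
  rw [G, empty_of_nonpos φ (by simp [hx] : min x 1 ≤ 0), Real.sSup_empty]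

lemma G_mono : Monotone (G φ) := by
  intro a b hab
  set a' := min a 1 with ha'
  set b' := min b 1 with hb'
  have hab' : a' ≤ b' := min_le_min hab le_rfl
  have hb1 : b' ≤ 1 := min_le_right _ _
  rcases le_or_gt a' 0 with h0 | h0
  · rw [G, ← ha', empty_of_nonpos φ h0, Real.sSup_empty]
    exact G_nonneg φ hφ hbdd b
  · rcases eq_or_lt_of_le hab' with heq | hlt
    · simp only [G, ← ha', ← hb', heq]
      exact le_rfl
    · refine csSup_le (nonempty_of_pos φ h0) fun S hS => ?_
      have h1 := le_csSup (bdd φ hφ hbdd hb1) (extend φ hlt hS)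
      have := hφ a' b'
      show S ≤ sSup (partitionSums φ 0 b')
      linarith

lemma G_key {u v : ℝ} (hu : 0 < u) (huv : u < v) (hv : v ≤ 1) :
    G φ u + φ u v ≤ G φ v := by
  have hmu : min u 1 = u := min_eq_left (huv.le.trans hv)
  have hmv : min v 1 = v := min_eq_left hv
  rw [G, G, hmu, hmv]
  have : sSup (partitionSums φ 0 u) ≤ sSup (partitionSums φ 0 v) - φ u v := by
    refine csSup_le (nonempty_of_pos φ hu) fun S hS => ?_
    have := le_csSup (bdd φ hφ hbdd hv) (extend φ huv hS)
    linarith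
  linarith

end MarcAux

theorem marcinkiewicz_inequality (p : ℝ) (hp : 1 ≤ p) (f : ℝ → ℝ) (hf : Measurable f)
    (hbdd : BddAbove (partitionSums (fun s t => |f t - f s| ^ p) 0 1)) :
    ∫⁻ x in Set.Ioo (0 : ℝ) 1, Filter.limsup
        (fun h : ℝ => ENNReal.ofReal (|f (x + h) - f x| ^ p / |h|)) (𝓝[≠] (0 : ℝ)) ≤
      ENNReal.ofReal (sSup (partitionSums (fun s t => |f t - f s| ^ p) 0 1)) := by
  set φ : ℝ → ℝ → ℝ := fun s t => |f t - f s| ^ p with hφdef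
  have hφ : ∀ s t, 0 ≤ φ s t := fun s t => Real.rpow_nonneg (abs_nonneg _) p
  set G := MarcAux.G φ with hGdef
  have hG : Monotone G := MarcAux.G_mono φ hφ hbdd
  set μ := hG.stieltjesFunction.measure with hμdef
  have step1 : ∫⁻ x in Set.Ioo (0 : ℝ) 1, Filter.limsup
        (fun h : ℝ => ENNReal.ofReal (|f (x + h) - f x| ^ p / |h|)) (𝓝[≠] (0 : ℝ)) ≤
      ∫⁻ x in Set.Ioo (0 : ℝ) 1, μ.rnDeriv volume x := by
    refine lintegral_mono_ae ?_
    filter_upwards [ae_restrict_mem measurableSet_Ioo, ae_restrict_of_ae hG.ae_hasDerivAt]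
      with x hx hderiv
    obtain ⟨hx0, hx1⟩ := hx
    set d := (μ.rnDeriv volume x).toReal with hd
    -- slope of G tends to d
    have hmap : Filter.Tendsto (fun h : ℝ => x + h) (𝓝[≠] (0 : ℝ)) (𝓝[≠] x) := by
      apply tendsto_nhdsWithin_of_tendsto_nhds_of_eventually_within
      · have : Filter.Tendsto (fun h : ℝ => x + h) (𝓝 (0 : ℝ)) (𝓝 (x + 0)) :=
          tendsto_const_nhds.add Filter.tendsto_id
        simpa using this.mono_left nhdsWithin_le_nhds
      · filter_upwards [self_mem_nhdsWithin] with h hh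
        simp only [Set.mem_compl_iff, Set.mem_singleton_iff]
        intro hc
        apply hh
        simp only [Set.mem_singleton_iff]
        linarith
    have hslope : Filter.Tendsto (fun h : ℝ => (G (x + h) - G x) / h) (𝓝[≠] (0 : ℝ)) (𝓝 d) := by
      have := (hasDerivAt_iff_tendsto_slope.1 hderiv).comp hmap
      apply this.congr
      intro h
      simp only [Function.comp, slope_def_field, add_sub_cancel_left]
    have hT : Filter.Tendsto (fun h : ℝ => ENNReal.ofReal ((G (x + h) - G x) / h))
        (𝓝[≠] (0 : ℝ)) (𝓝 (ENNReal.ofReal d)) :=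
      (ENNReal.continuous_ofReal.tendsto d).comp hslope
    -- eventual comparison
    have hev : ∀ᶠ h in 𝓝[≠] (0 : ℝ),
        ENNReal.ofReal (|f (x + h) - f x| ^ p / |h|) ≤
          ENNReal.ofReal ((G (x + h) - G x) / h) := by
      have hsmall : ∀ᶠ h in 𝓝 (0 : ℝ), |h| < min x (1 - x) := by
        have hpos : 0 < min x (1 - x) := lt_min hx0 (by linarith)
        have := Metric.ball_mem_nhds (0 : ℝ) hpos
        filter_upwards [this] with h hh
        simpa [Real.dist_eq] using hh
      filter_upwards [eventually_nhdsWithin_of_eventually_nhds hsmall, self_mem_nhdsWithin]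
        with h hh hne
      have hne' : h ≠ 0 := hne
      have habs := abs_lt.1 (hh.trans_le (min_le_left _ _))
      have habs' := abs_lt.1 (hh.trans_le (min_le_right _ _))
      have hxh0 : 0 < x + h := by linarith [habs.1]
      have hxh1 : x + h < 1 := by linarith [habs'.2]
      apply ENNReal.ofReal_le_ofReal
      rcases lt_or_gt_of_ne hne' with hneg | hpos
      · -- h < 0
        have hkey := MarcAux.G_key φ hφ hbdd hxh0 (by linarith : x + h < x) hx1.le
        have hφeq : φ (x + h) x = |f (x + h) - f x| ^ p := by
          rw [hφdef]; simp only; rw [abs_sub_comm]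
        rw [hφeq] at hkey
        rw [abs_of_neg hneg]
        have h1 : |f (x + h) - f x| ^ p / (-h) ≤ (G x - G (x + h)) / (-h) := by
          apply div_le_div_of_nonneg_right ?_ (by linarith)
          · linarith
        calc |f (x + h) - f x| ^ p / (-h) ≤ (G x - G (x + h)) / (-h) := h1
          _ = (G (x + h) - G x) / h := by rw [div_neg, ← neg_div, neg_sub]
      · -- h > 0
        have hkey := MarcAux.G_key φ hφ hbdd hx0 (by linarith : x < x + h) hxh1.le
        have hφeq : φ x (x + h) = |f (x + h) - f x| ^ p := rfl
        rw [hφeq] at hkey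
        rw [abs_of_pos hpos]
        apply div_le_div_of_nonneg_right ?_ hpos.le
        linarith
    calc Filter.limsup (fun h : ℝ => ENNReal.ofReal (|f (x + h) - f x| ^ p / |h|))
          (𝓝[≠] (0 : ℝ))
        ≤ Filter.limsup (fun h : ℝ => ENNReal.ofReal ((G (x + h) - G x) / h))
          (𝓝[≠] (0 : ℝ)) := Filter.limsup_le_limsup hev
      _ = ENNReal.ofReal d := hT.limsup_eq
      _ ≤ μ.rnDeriv volume x := ENNReal.ofReal_toReal_le
  have step2 : ∫⁻ x in Set.Ioo (0 : ℝ) 1, μ.rnDeriv volume x ≤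
      ENNReal.ofReal (sSup (partitionSums φ 0 1)) := by
    calc ∫⁻ x in Set.Ioo (0 : ℝ) 1, μ.rnDeriv volume x
        = (volume.withDensity (μ.rnDeriv volume)) (Set.Ioo 0 1) :=
          (withDensity_apply _ measurableSet_Ioo).symm
      _ ≤ μ (Set.Ioo 0 1) := Measure.withDensity_rnDeriv_le μ volume _
      _ ≤ μ (Set.Ioc 0 1) := measure_mono Set.Ioo_subset_Ioc_self
      _ = ENNReal.ofReal (hG.stieltjesFunction 1 - hG.stieltjesFunction 0) :=
          hG.stieltjesFunction.measure_Ioc 0 1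
      _ ≤ ENNReal.ofReal (sSup (partitionSums φ 0 1)) := by
          apply ENNReal.ofReal_le_ofReal
          have h1 : hG.stieltjesFunction 1 ≤ G 2 := by
            rw [hG.stieltjesFunction_eq]
            exact hG.rightLim_le (by norm_num)
          have h2 : G 0 ≤ hG.stieltjesFunction 0 := by
            rw [hG.stieltjesFunction_eq]
            exact hG.le_rightLim le_rfl
          have hG0 : G 0 = 0 := MarcAux.G_zero_of_nonpos φ hφ hbdd le_rfl
          have hG2 : G 2 = sSup (partitionSums φ 0 1) := by
            rw [hGdef, MarcAux.G]
            norm_num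
          linarith
  exact step1.trans step2
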